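/- Let 0<q<1 and let a,b,z∈ℂ with |z|<1, a≠b, b≠aq and a≠bq. Put φ = ₂φ₁(a,b;−q;q,z), φ⁺ = ₂φ₁(aq, b/q; −q; q, z) and φ⁻ = ₂φ₁(a/q, bq; −q; q, z). Then ( q(1+q)(ab−q)/((aq−b)(a−bq)) + z )·φ = ( q(1−a)(b+q)/((a−b)(b−aq)) )·φ⁺ + ( q(1−b)(a+q)/((b−a)(a−bq)) )·φ⁻. -/

import Mathlib

open scoped BigOperators

noncomputable section

/-- finite q-Pochhammer symbol `(a;q)_n`. -/
def qPoch (a q : ℂ) (n : ℕ) : ℂ := ∏ j ∈ Finset.range n, (1 - a * q ^ j)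

/-- basic hypergeometric series `₂φ₁(a,b;c;q,z)`. -/
def phi21 (a b c q z : ℂ) : ℂ :=
  ∑' n : ℕ, (qPoch a q n * qPoch b q n) / (qPoch c q n * qPoch q q n) * z ^ n

lemma qPoch_succ (a q : ℂ) (n : ℕ) : qPoch a q (n+1) = qPoch a q n * (1 - a * q ^ n) :=
  Finset.prod_range_succ _ _

lemma qPoch_shift (a q : ℂ) (n : ℕ) : qPoch a q (n+1) = (1 - a) * qPoch (a*q) q n := by
  unfold qPoch
  rw [Finset.prod_range_succ', mul_comm]
  congr 1
  · simp
  · exact Finset.prod_congr rfl fun j _ => by ring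

lemma qPoch_div_shift (b q : ℂ) (hq : q ≠ 0) (n : ℕ) :
    qPoch (b/q) q (n+1) = (1 - b/q) * qPoch b q n := by
  have := qPoch_shift (b/q) q n
  rwa [div_mul_cancel₀ _ hq] at this

lemma qPoch_div_shift' (b q : ℂ) (hq : q ≠ 0) (n : ℕ) :
    q * qPoch (b/q) q (n+1) = (q - b) * qPoch b q n := by
  rw [qPoch_div_shift b q hq n, ← mul_assoc, mul_sub, mul_div_cancel₀ _ hq, mul_one]

lemma qPoch_up2 (a q : ℂ) (n : ℕ) :
    (1 - a) * qPoch (a*q) q (n+1) = qPoch a q n * (1 - a * q ^ n) * (1 - a * q ^ (n+1)) := by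
  rw [← qPoch_shift, qPoch_succ, qPoch_succ]

lemma one_add_pow_ne {q : ℝ} (hq0 : 0 < q) (k : ℕ) : (1 : ℂ) + (q:ℂ)^k ≠ 0 := by
  have : (1 : ℂ) + (q:ℂ)^k = ((1 + q^k : ℝ) : ℂ) := by push_cast; ring
  rw [this]
  exact_mod_cast (by positivity : (0:ℝ) < 1 + q^k).ne'

lemma one_sub_pow_ne {q : ℝ} (hq0 : 0 < q) (hq1 : q < 1) (k : ℕ) :
    (1 : ℂ) - (q:ℂ)^(k+1) ≠ 0 := by
  have hlt : q^(k+1) < 1 := pow_lt_one₀ hq0.le hq1 (Nat.succ_ne_zero k)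
  have : (1 : ℂ) - (q:ℂ)^(k+1) = ((1 - q^(k+1) : ℝ) : ℂ) := by push_cast; ring
  rw [this]
  exact_mod_cast (by linarith : (0:ℝ) < 1 - q^(k+1)).ne'

lemma qPoch_negq_ne {q : ℝ} (hq0 : 0 < q) (n : ℕ) : qPoch (-(q:ℂ)) (q:ℂ) n ≠ 0 := by
  refine Finset.prod_ne_zero_iff.2 fun j _ => ?_
  have : (1 : ℂ) - (-(q:ℂ)) * (q:ℂ)^j = 1 + (q:ℂ)^(j+1) := by ring
  rw [this]; exact one_add_pow_ne hq0 _

lemma qPoch_q_ne {q : ℝ} (hq0 : 0 < q) (hq1 : q < 1) (n : ℕ) : qPoch (q:ℂ) (q:ℂ) n ≠ 0 := by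
  refine Finset.prod_ne_zero_iff.2 fun j _ => ?_
  have : (1 : ℂ) - (q:ℂ) * (q:ℂ)^j = 1 - (q:ℂ)^(j+1) := by ring
  rw [this]; exact one_sub_pow_ne hq0 hq1 _

lemma summable_phi {q : ℝ} (hq0 : 0 < q) (hq1 : q < 1) (a b z : ℂ) (hz : ‖z‖ < 1) :
    Summable (fun n : ℕ =>
      qPoch a (q:ℂ) n * qPoch b (q:ℂ) n / (qPoch (-(q:ℂ)) (q:ℂ) n * qPoch (q:ℂ) (q:ℂ) n) * z ^ n) := by
  set f := fun n : ℕ =>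
      qPoch a (q:ℂ) n * qPoch b (q:ℂ) n / (qPoch (-(q:ℂ)) (q:ℂ) n * qPoch (q:ℂ) (q:ℂ) n) * z ^ n
      with hf
  set g := fun n : ℕ =>
      (1 - a * (q:ℂ)^n) * (1 - b * (q:ℂ)^n) * z / ((1 + (q:ℂ)^(n+1)) * (1 - (q:ℂ)^(n+1)))
      with hg
  have hrec : ∀ n, f (n+1) = f n * g n := by
    intro n
    have hE1 := qPoch_negq_ne hq0 n
    have hE2 := qPoch_q_ne hq0 hq1 n
    have h1 := one_add_pow_ne hq0 (q := q) (n+1)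
    have h2 := one_sub_pow_ne hq0 hq1 (q := q) n
    simp only [hf, hg, qPoch_succ]
    have e1 : (1 : ℂ) - (-(q:ℂ)) * (q:ℂ)^n = 1 + (q:ℂ)^(n+1) := by ring
    have e2 : (1 : ℂ) - (q:ℂ) * (q:ℂ)^n = 1 - (q:ℂ)^(n+1) := by ring
    rw [e1, e2]
    field_simp
    ring
  have hten : Filter.Tendsto (fun n : ℕ => ‖g n‖) Filter.atTop
      (nhds ‖z‖) := by
    have hqn : Filter.Tendsto (fun n : ℕ => (q:ℂ)^n) Filter.atTop (nhds 0) := by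
      apply tendsto_pow_atTop_nhds_zero_of_norm_lt_one
      rw [Complex.norm_of_nonneg hq0.le]
      exact hq1
    have hqn1 : Filter.Tendsto (fun n : ℕ => (q:ℂ)^(n+1)) Filter.atTop (nhds 0) := by
      exact hqn.comp (Filter.tendsto_add_atTop_nat 1)
    have hone : Filter.Tendsto (fun _ : ℕ => (1:ℂ)) Filter.atTop (nhds 1) :=
      tendsto_const_nhds
    have hzc : Filter.Tendsto (fun _ : ℕ => z) Filter.atTop (nhds z) := tendsto_const_nhds
    have hnum : Filter.Tendsto (fun n : ℕ => (1 - a * (q:ℂ)^n) * (1 - b * (q:ℂ)^n) * z)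
        Filter.atTop (nhds z) := by
      have := ((hone.sub (hqn.const_mul a)).mul (hone.sub (hqn.const_mul b))).mul hzc
      simpa using this
    have hden : Filter.Tendsto (fun n : ℕ => (1 + (q:ℂ)^(n+1)) * (1 - (q:ℂ)^(n+1)))
        Filter.atTop (nhds 1) := by
      have := (hone.add hqn1).mul (hone.sub hqn1)
      simpa using this
    have : Filter.Tendsto g Filter.atTop (nhds z) := by
      have := hnum.div hden one_ne_zero
      rwa [div_one] at this
    exact (continuous_norm.tendsto z).comp this
  set r := (1 + ‖z‖)/2 with hr
  have hr1 : r < 1 := by rw [hr]; linarith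
  have hzr : ‖z‖ < r := by rw [hr]; linarith
  apply summable_of_ratio_norm_eventually_le hr1
  filter_upwards [hten.eventually_lt_const hzr] with n hn
  rw [hrec n, norm_mul, mul_comm]
  exact mul_le_mul_of_nonneg_right (le_of_lt (by simpa using hn)) (norm_nonneg _)

set_option maxHeartbeats 1000000 in
lemma coef_id (q : ℝ) (hq0 : 0 < q) (hq1 : q < 1) (a b : ℂ) (n : ℕ) :
    ((q:ℂ) * (1 - a) * (b + (q:ℂ)) * (a - b * (q:ℂ)) * (a * (q:ℂ) - b)) *
        (qPoch (a * (q:ℂ)) (q:ℂ) (n+1) * qPoch (b / (q:ℂ)) (q:ℂ) (n+1) /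
          (qPoch (-(q:ℂ)) (q:ℂ) (n+1) * qPoch (q:ℂ) (q:ℂ) (n+1)))
      + (-(q:ℂ) * (1 - b) * (a + (q:ℂ)) * (b - a * (q:ℂ)) * (a * (q:ℂ) - b)) *
        (qPoch (a / (q:ℂ)) (q:ℂ) (n+1) * qPoch (b * (q:ℂ)) (q:ℂ) (n+1) /
          (qPoch (-(q:ℂ)) (q:ℂ) (n+1) * qPoch (q:ℂ) (q:ℂ) (n+1)))
      - ((q:ℂ) * (1 + (q:ℂ)) * (a * b - (q:ℂ)) * (a - b) * (b - a * (q:ℂ))) *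
        (qPoch a (q:ℂ) (n+1) * qPoch b (q:ℂ) (n+1) /
          (qPoch (-(q:ℂ)) (q:ℂ) (n+1) * qPoch (q:ℂ) (q:ℂ) (n+1)))
      = ((a - b) * (b - a * (q:ℂ)) * (a - b * (q:ℂ)) * (a * (q:ℂ) - b)) *
        (qPoch a (q:ℂ) n * qPoch b (q:ℂ) n / (qPoch (-(q:ℂ)) (q:ℂ) n * qPoch (q:ℂ) (q:ℂ) n)) := by
  have hq : (q:ℂ) ≠ 0 := Complex.ofReal_ne_zero.mpr hq0.ne'
  have hE1 : qPoch (-(q:ℂ)) (q:ℂ) n ≠ 0 := qPoch_negq_ne hq0 n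
  have hE2 : qPoch (q:ℂ) (q:ℂ) n ≠ 0 := qPoch_q_ne hq0 hq1 n
  have hd1 : (1:ℂ) + (q:ℂ)^(n+1) ≠ 0 := one_add_pow_ne hq0 _
  have hd2 : (1:ℂ) - (q:ℂ)^(n+1) ≠ 0 := one_sub_pow_ne hq0 hq1 n
  have h1 := qPoch_up2 a (q:ℂ) n
  have h2 := qPoch_up2 b (q:ℂ) n
  have hw1 := qPoch_div_shift' b (q:ℂ) hq n
  have hw2 := qPoch_div_shift' a (q:ℂ) hq n
  rw [qPoch_succ a (q:ℂ) n, qPoch_succ b (q:ℂ) n,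
      qPoch_succ (-(q:ℂ)) (q:ℂ) n, qPoch_succ (q:ℂ) (q:ℂ) n]
  rw [show (1:ℂ) - (-(q:ℂ)) * (q:ℂ)^n = 1 + (q:ℂ)^(n+1) from by ring,
      show (1:ℂ) - (q:ℂ) * (q:ℂ)^n = 1 - (q:ℂ)^(n+1) from by ring]
  set X := qPoch a (q:ℂ) n
  set Y := qPoch b (q:ℂ) n
  set E1 := qPoch (-(q:ℂ)) (q:ℂ) n
  set E2 := qPoch (q:ℂ) (q:ℂ) n
  set U := qPoch (a * (q:ℂ)) (q:ℂ) (n+1)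
  set V := qPoch (b * (q:ℂ)) (q:ℂ) (n+1)
  set W1 := qPoch (b / (q:ℂ)) (q:ℂ) (n+1)
  set W2 := qPoch (a / (q:ℂ)) (q:ℂ) (n+1)
  have hD : E1 * (1 + (q:ℂ)^(n+1)) * (E2 * (1 - (q:ℂ)^(n+1))) ≠ 0 :=
    mul_ne_zero (mul_ne_zero hE1 hd1) (mul_ne_zero hE2 hd2)
  have hE : E1 * E2 ≠ 0 := mul_ne_zero hE1 hE2
  calc ((q:ℂ) * (1 - a) * (b + (q:ℂ)) * (a - b * (q:ℂ)) * (a * (q:ℂ) - b)) *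
        (U * W1 / (E1 * (1 + (q:ℂ)^(n+1)) * (E2 * (1 - (q:ℂ)^(n+1)))))
      + (-(q:ℂ) * (1 - b) * (a + (q:ℂ)) * (b - a * (q:ℂ)) * (a * (q:ℂ) - b)) *
        (W2 * V / (E1 * (1 + (q:ℂ)^(n+1)) * (E2 * (1 - (q:ℂ)^(n+1)))))
      - ((q:ℂ) * (1 + (q:ℂ)) * (a * b - (q:ℂ)) * (a - b) * (b - a * (q:ℂ))) *
        ((X * (1 - a * (q:ℂ)^n)) * (Y * (1 - b * (q:ℂ)^n)) /
          (E1 * (1 + (q:ℂ)^(n+1)) * (E2 * (1 - (q:ℂ)^(n+1)))))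
      = (((b + (q:ℂ)) * (a - b * (q:ℂ)) * (a * (q:ℂ) - b)) *
            (((1 - a) * U) * ((q:ℂ) * W1))
          + (-((a + (q:ℂ)) * (b - a * (q:ℂ)) * (a * (q:ℂ) - b)) *
            (((q:ℂ) * W2) * ((1 - b) * V)))
          - ((q:ℂ) * (1 + (q:ℂ)) * (a * b - (q:ℂ)) * (a - b) * (b - a * (q:ℂ))) *
            ((X * (1 - a * (q:ℂ)^n)) * (Y * (1 - b * (q:ℂ)^n))))
        / (E1 * (1 + (q:ℂ)^(n+1)) * (E2 * (1 - (q:ℂ)^(n+1)))) := by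
          field_simp
    _ = ((a - b) * (b - a * (q:ℂ)) * (a - b * (q:ℂ)) * (a * (q:ℂ) - b)) *
        (X * Y / (E1 * E2)) := by
          rw [h1, h2, hw1, hw2, ← mul_div_assoc, div_eq_div_iff hD hE]
          ring

/-- Contiguous relation for `₂φ₁`-series (equation (3.5) of the paper):
with `φ = ₂φ₁(a,b;−q;q,z)`, `φ⁺ = ₂φ₁(aq,b/q;−q;q,z)`, `φ⁻ = ₂φ₁(a/q,bq;−q;q,z)`,
`(q(1+q)(ab−q)/((aq−b)(a−bq)) + z)·φ
  = (q(1−a)(b+q)/((a−b)(b−aq)))·φ⁺ + (q(1−b)(a+q)/((b−a)(a−bq)))·φ⁻`. -/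
theorem contiguous_relation_phi (q : ℝ) (hq0 : 0 < q) (hq1 : q < 1) (a b z : ℂ)
    (hz : ‖z‖ < 1) (hab : a ≠ b) (hab1 : b ≠ a * (q : ℂ)) (hab2 : a ≠ b * (q : ℂ)) :
    ((q : ℂ) * (1 + (q : ℂ)) * (a * b - (q : ℂ)) /
        ((a * (q : ℂ) - b) * (a - b * (q : ℂ))) + z) * phi21 a b (-(q : ℂ)) (q : ℂ) z =
      (q : ℂ) * (1 - a) * (b + (q : ℂ)) / ((a - b) * (b - a * (q : ℂ))) *
          phi21 (a * (q : ℂ)) (b / (q : ℂ)) (-(q : ℂ)) (q : ℂ) z +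
        (q : ℂ) * (1 - b) * (a + (q : ℂ)) / ((b - a) * (a - b * (q : ℂ))) *
          phi21 (a / (q : ℂ)) (b * (q : ℂ)) (-(q : ℂ)) (q : ℂ) z := by
  have hq : (q:ℂ) ≠ 0 := Complex.ofReal_ne_zero.mpr hq0.ne'
  have hAB : a - b ≠ 0 := sub_ne_zero.mpr hab
  have hBA : b - a ≠ 0 := sub_ne_zero.mpr hab.symm
  have hBAq : b - a * (q:ℂ) ≠ 0 := sub_ne_zero.mpr hab1
  have hABq : a - b * (q:ℂ) ≠ 0 := sub_ne_zero.mpr hab2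
  have hAqB : a * (q:ℂ) - b ≠ 0 := sub_ne_zero.mpr (Ne.symm hab1)
  set A2 : ℂ := (q:ℂ) * (1 - a) * (b + (q:ℂ)) * (a - b * (q:ℂ)) * (a * (q:ℂ) - b) with hA2
  set B2 : ℂ := -(q:ℂ) * (1 - b) * (a + (q:ℂ)) * (b - a * (q:ℂ)) * (a * (q:ℂ) - b) with hB2
  set C2 : ℂ := (q:ℂ) * (1 + (q:ℂ)) * (a * b - (q:ℂ)) * (a - b) * (b - a * (q:ℂ)) with hC2
  set D2 : ℂ := (a - b) * (b - a * (q:ℂ)) * (a - b * (q:ℂ)) * (a * (q:ℂ) - b) with hD2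
  have hDne : D2 ≠ 0 := by
    rw [hD2]
    exact mul_ne_zero (mul_ne_zero (mul_ne_zero hAB hBAq) hABq) hAqB
  set ft : ℕ → ℂ := fun n =>
    qPoch a (q:ℂ) n * qPoch b (q:ℂ) n /
      (qPoch (-(q:ℂ)) (q:ℂ) n * qPoch (q:ℂ) (q:ℂ) n) * z ^ n with hft
  set fu : ℕ → ℂ := fun n =>
    qPoch (a * (q:ℂ)) (q:ℂ) n * qPoch (b / (q:ℂ)) (q:ℂ) n /
      (qPoch (-(q:ℂ)) (q:ℂ) n * qPoch (q:ℂ) (q:ℂ) n) * z ^ n with hfu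
  set fv : ℕ → ℂ := fun n =>
    qPoch (a / (q:ℂ)) (q:ℂ) n * qPoch (b * (q:ℂ)) (q:ℂ) n /
      (qPoch (-(q:ℂ)) (q:ℂ) n * qPoch (q:ℂ) (q:ℂ) n) * z ^ n with hfv
  have hSf : Summable ft := summable_phi hq0 hq1 a b z hz
  have hSu : Summable fu := summable_phi hq0 hq1 _ _ z hz
  have hSv : Summable fv := summable_phi hq0 hq1 _ _ z hz
  have hPt : phi21 a b (-(q:ℂ)) (q:ℂ) z = ∑' n, ft n := by
    rw [hft]; rfl
  have hPu : phi21 (a * (q:ℂ)) (b / (q:ℂ)) (-(q:ℂ)) (q:ℂ) z = ∑' n, fu n := by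
    rw [hfu]; rfl
  have hPv : phi21 (a / (q:ℂ)) (b * (q:ℂ)) (-(q:ℂ)) (q:ℂ) z = ∑' n, fv n := by
    rw [hfv]; rfl
  have hw : Summable (fun n => A2 * fu n + B2 * fv n - C2 * ft n) :=
    ((hSu.mul_left A2).add (hSv.mul_left B2)).sub (hSf.mul_left C2)
  have hsum : ∑' n, (A2 * fu n + B2 * fv n - C2 * ft n)
      = A2 * (∑' n, fu n) + B2 * (∑' n, fv n) - C2 * (∑' n, ft n) := by
    rw [Summable.tsum_sub ((hSu.mul_left A2).add (hSv.mul_left B2)) (hSf.mul_left C2),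
        Summable.tsum_add (hSu.mul_left A2) (hSv.mul_left B2), tsum_mul_left, tsum_mul_left,
        tsum_mul_left]
  have hzero : A2 * fu 0 + B2 * fv 0 - C2 * ft 0 = 0 := by
    simp only [hft, hfu, hfv]
    simp only [pow_zero, mul_one]
    simp [qPoch, hA2, hB2, hC2]
    ring
  have hstep : ∀ n, A2 * fu (n+1) + B2 * fv (n+1) - C2 * ft (n+1) = D2 * ft n * z := by
    intro n
    have hcid := coef_id q hq0 hq1 a b n
    simp only [hft, hfu, hfv]
    rw [hA2, hB2, hC2, hD2]
    linear_combination (z^(n+1)) * hcid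
  have hts : ∑' n, (A2 * fu n + B2 * fv n - C2 * ft n) = D2 * (∑' n, ft n) * z := by
    rw [Summable.tsum_eq_zero_add hw, hzero, zero_add]
    calc ∑' n, (A2 * fu (n+1) + B2 * fv (n+1) - C2 * ft (n+1))
        = ∑' n, (D2 * ft n * z) := tsum_congr fun n => hstep n
      _ = D2 * (∑' n, ft n) * z := by rw [tsum_mul_right, tsum_mul_left]
  have H : A2 * (∑' n, fu n) + B2 * (∑' n, fv n) - C2 * (∑' n, ft n)
      = D2 * (∑' n, ft n) * z := by rw [← hsum, hts]
  have hA : D2 * ((q:ℂ) * (1 - a) * (b + (q:ℂ)) / ((a - b) * (b - a * (q:ℂ)))) = A2 := by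
    rw [hD2, hA2]; field_simp
  have hB : D2 * ((q:ℂ) * (1 - b) * (a + (q:ℂ)) / ((b - a) * (a - b * (q:ℂ)))) = B2 := by
    rw [hD2, hB2]; field_simp; ring
  have hC : D2 * ((q:ℂ) * (1 + (q:ℂ)) * (a * b - (q:ℂ)) /
      ((a * (q:ℂ) - b) * (a - b * (q:ℂ)))) = C2 := by
    rw [hD2, hC2]; field_simp
  rw [hPt, hPu, hPv]
  apply mul_left_cancel₀ hDne
  linear_combination (∑' n, ft n) * hC - (∑' n, fu n) * hA - (∑' n, fv n) * hB - H

end
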